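/- Let v(a) = (a - τ)₊ for some τ ∈ [0,∞), and suppose λ ∈ [0,1] and d ∈ [0,∞] satisfy the incentive compatibility constraint v(a') - v(a) ≥ λ[(a' - d)₊ - (a - d)₊] for all a' ≥ 0, where a < τ. Then either λ = 0, or d ≥ τ. In particular, the achievable value λ(a - d)₊ is zero. -/
import Mathlib


open scoped ENNReal

/-- `(x - d)₊` for a deductible `d ∈ [0,∞]`, with `(x - ∞)₊ = 0`. -/
noncomputable def pp (x : ℝ) (d : ℝ≥0∞) : ℝ :=
  if d = ⊤ then 0 else max (x - d.toReal) 0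

/-- for `v(a) = (a - τ)₊`, `a < τ`, and a change-loss contract
`(λ, d)` satisfying the IC constraint, either `λ = 0` or `d ≥ τ`; in particular
the achievable value `λ(a - d)₊` is zero. -/
theorem stmt14 (τ : ℝ) (hτ : 0 ≤ τ) (a : ℝ) (ha : 0 ≤ a) (haτ : a < τ)
    (l : ℝ) (hl0 : 0 ≤ l) (hl1 : l ≤ 1) (d : ℝ≥0∞)
    (hIC : ∀ a' ≥ (0:ℝ),
      max (a' - τ) 0 - max (a - τ) 0 ≥ l * (pp a' d - pp a d)) :
    (l = 0 ∨ ENNReal.ofReal τ ≤ d) ∧ l * pp a d = 0 := by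
  by_cases hd : d = ⊤
  · subst hd
    simp [pp]
  rcases eq_or_lt_of_le hl0 with hl | hl
  · constructor
    · exact Or.inl hl.symm
    · rw [← hl]; ring
  -- l > 0 case
  have key := hIC τ hτ
  simp only [pp, if_neg hd, sub_self, max_self, max_eq_right (le_of_lt (sub_neg.mpr haτ))] at key
  -- key : 0 - 0 ≥ l * (max (τ - d.toReal) 0 - max (a - d.toReal) 0)
  have hmax : max (τ - d.toReal) 0 ≤ max (a - d.toReal) 0 := by
    nlinarith [key]
  have hdτ : τ ≤ d.toReal := by
    by_contra h
    push_neg at h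
    have h1 : max (τ - d.toReal) 0 = τ - d.toReal := max_eq_left (by linarith)
    have h2 : max (a - d.toReal) 0 ≤ max (τ - d.toReal) 0 :=
      max_le_max (by linarith) le_rfl
    have : a - d.toReal < τ - d.toReal := by linarith
    rcases le_or_gt (a - d.toReal) 0 with hc | hc
    · have : max (a - d.toReal) 0 = 0 := max_eq_right hc
      linarith [hmax, h1.symm ▸ hmax]
    · have : max (a - d.toReal) 0 = a - d.toReal := max_eq_left hc.le
      rw [h1, this] at hmax
      linarith
  have hppa : pp a d = 0 := by
    simp [pp, if_neg hd, max_eq_right (by linarith : a - d.toReal ≤ 0)]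
  refine ⟨Or.inr ?_, by rw [hppa]; ring⟩
  rw [← ENNReal.ofReal_toReal hd]
  exact ENNReal.ofReal_le_ofReal hdτ
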